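/- Let 𝒦 and ℒ be complete DFAs with state sets Q_K = {1,…,m} and Q_L = {1,…,n}, initial states 1 and 1, and let 𝒩 be the shuffle NFA on Q_K × Q_L. Fix s ∈ {2,…,m} and t ∈ {2,…,n}, and let C_{st} = {(s,1),(1,t)}. If S ⊆ Q_K × Q_L is a subset reachable from {(1,1)} in the subset automaton of 𝒩, S ≠ C_{st}, and δ(S,a) = C_{st} for some letter a, then (1,1) ∈ S. -/

import Mathlib

/-- `IsShuffleOf u v w` means that the word `w` is a shuffle (interleaving)
of the words `u` and `v`. -/
inductive IsShuffleOf {α : Type*} : List α → List α → List α → Prop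
  | nil : IsShuffleOf [] [] []
  | left {a : α} {u v w : List α} : IsShuffleOf u v w → IsShuffleOf (a :: u) v (a :: w)
  | right {a : α} {u v w : List α} : IsShuffleOf u v w → IsShuffleOf u (a :: v) (a :: w)

/-- The shuffle `K ⧢ L` of two languages. -/
def shuffleLang {α : Type*} (K L : Language α) : Language α :=
  {w | ∃ u ∈ K, ∃ v ∈ L, IsShuffleOf u v w}

/-- The shuffle NFA `𝒩` built from two complete DFAs `𝒦` and `ℒ`. -/
def shuffleNFA {α σK σL : Type*} (K : DFA α σK) (L : DFA α σL) : NFA α (σK × σL) where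
  step := fun pq a => {(K.step pq.1 a, pq.2), (pq.1, L.step pq.2 a)}
  start := {(K.start, L.start)}
  accept := {pq | pq.1 ∈ K.accept ∧ pq.2 ∈ L.accept}

/-- `IsStateComplexity L m` says the minimal complete DFA recognizing `L`
has exactly `m` states. -/
def IsStateComplexity {α : Type*} (L : Language α) (m : ℕ) : Prop :=
  (∃ (σ : Type) (_ : Fintype σ) (M : DFA α σ), M.accepts = L ∧ Fintype.card σ = m) ∧
  (∀ (σ : Type) (_ : Fintype σ) (M : DFA α σ), M.accepts = L → m ≤ Fintype.card σ)


lemma shuffle_aux_right {α σK σL : Type*} (K : DFA α σK) (L : DFA α σL) :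
    ∀ (w : List α) (S : Set (σK × σL)) (p : σK) (q : σL), (p, q) ∈ S →
      (p, L.evalFrom q w) ∈ (shuffleNFA K L).evalFrom S w := by
  intro w
  induction w with
  | nil => intro S p q h; simpa [NFA.evalFrom, DFA.evalFrom] using h
  | cons a w ih =>
      intro S p q h
      have h1 : (p, L.step q a) ∈ (shuffleNFA K L).stepSet S a := by
        rw [NFA.mem_stepSet]
        exact ⟨(p, q), h, by simp [shuffleNFA]⟩
      simpa [NFA.evalFrom, DFA.evalFrom] using ih _ p (L.step q a) h1

lemma shuffle_aux_left {α σK σL : Type*} (K : DFA α σK) (L : DFA α σL) :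
    ∀ (w : List α) (S : Set (σK × σL)) (p : σK) (q : σL), (p, q) ∈ S →
      (K.evalFrom p w, q) ∈ (shuffleNFA K L).evalFrom S w := by
  intro w
  induction w with
  | nil => intro S p q h; simpa [NFA.evalFrom, DFA.evalFrom] using h
  | cons a w ih =>
      intro S p q h
      have h1 : (K.step p a, q) ∈ (shuffleNFA K L).stepSet S a := by
        rw [NFA.mem_stepSet]
        exact ⟨(p, q), h, by simp [shuffleNFA]⟩
      simpa [NFA.evalFrom, DFA.evalFrom] using ih _ (K.step p a) q h1

/-- If a reachable subset `S` of the subset automaton of the shuffle NFA goes to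
`C_{st} = {(s,1),(1,t)}` (with `s ≠ 1`, `t ≠ 1`) on some letter `a`, and `S ≠ C_{st}`,
then `(1,1) ∈ S`.  Here states are numbered so that 1 becomes `0 : Fin m`. -/
theorem stmt_7 {α : Type*} {m n : ℕ} [NeZero m] [NeZero n]
    (K : DFA α (Fin m)) (L : DFA α (Fin n))
    (hK : K.start = 0) (hL : L.start = 0)
    (s : Fin m) (hs : s ≠ 0) (t : Fin n) (ht : t ≠ 0)
    (S : Set (Fin m × Fin n)) (w : List α)
    (hreach : S = (shuffleNFA K L).evalFrom {((0 : Fin m), (0 : Fin n))} w)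
    (a : α)
    (hne : S ≠ {(s, (0 : Fin n)), ((0 : Fin m), t)})
    (hstep : (shuffleNFA K L).stepSet S a = {(s, (0 : Fin n)), ((0 : Fin m), t)}) :
    ((0 : Fin m), (0 : Fin n)) ∈ S := by
  by_contra h00
  have hmem : ∀ p q, (p, q) ∈ S →
      ((K.step p a = s ∧ q = 0) ∨ (K.step p a = 0 ∧ q = t)) ∧
      ((p = s ∧ L.step q a = 0) ∨ (p = 0 ∧ L.step q a = t)) := by
    intro p q hpq
    have h1 : (K.step p a, q) ∈ (shuffleNFA K L).stepSet S a :=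
      ((shuffleNFA K L).mem_stepSet).mpr ⟨(p, q), hpq, by simp [shuffleNFA]⟩
    have h2 : (p, L.step q a) ∈ (shuffleNFA K L).stepSet S a :=
      ((shuffleNFA K L).mem_stepSet).mpr ⟨(p, q), hpq, by simp [shuffleNFA]⟩
    rw [hstep] at h1 h2
    simp only [Set.mem_insert_iff, Set.mem_singleton_iff, Prod.mk.injEq] at h1 h2
    exact ⟨h1, h2⟩
  -- (0, L.evalFrom 0 w) ∈ S
  have hot : ((0 : Fin m), L.evalFrom 0 w) ∈ S := by
    rw [hreach]
    exact shuffle_aux_right K L w _ 0 0 rfl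
  have hto : (K.evalFrom 0 w, (0 : Fin n)) ∈ S := by
    rw [hreach]
    exact shuffle_aux_left K L w _ 0 0 rfl
  have hOt : ((0 : Fin m), t) ∈ S := by
    obtain ⟨h1, -⟩ := hmem 0 (L.evalFrom 0 w) hot
    rcases h1 with ⟨-, hq⟩ | ⟨-, hq⟩
    · exact absurd (hq ▸ hot) h00
    · exact hq ▸ hot
  have hSo : (s, (0 : Fin n)) ∈ S := by
    obtain ⟨-, h2⟩ := hmem (K.evalFrom 0 w) 0 hto
    rcases h2 with ⟨hp, -⟩ | ⟨hp, -⟩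
    · exact hp ▸ hto
    · exact absurd (hp ▸ hto) h00
  have hKs : K.step s a = s := by
    obtain ⟨h1, -⟩ := hmem s 0 hSo
    rcases h1 with ⟨h, -⟩ | ⟨-, h⟩
    · exact h
    · exact absurd h.symm ht
  apply hne
  apply Set.eq_of_subset_of_subset
  · rintro ⟨p, q⟩ he
    obtain ⟨h1, h2⟩ := hmem p q he
    have hq : q = 0 ∨ q = t := h1.imp And.right And.right
    have hp : p = s ∨ p = 0 := h2.imp And.left And.left
    rcases hp with rfl | rfl <;> rcases hq with rfl | rfl
    · exact Set.mem_insert _ _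
    · -- (s, t) ∈ S : contradiction
      exfalso
      rcases h1 with ⟨-, h⟩ | ⟨h, -⟩
      · exact ht h
      · exact hs (hKs ▸ h)
    · exact absurd he h00
    · exact Set.mem_insert_of_mem _ rfl
  · rintro ⟨p, q⟩ he
    simp only [Set.mem_insert_iff, Set.mem_singleton_iff, Prod.mk.injEq] at he
    rcases he with ⟨rfl, rfl⟩ | ⟨rfl, rfl⟩
    · exact hSo
    · exact hOt
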